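/- In the formal power series ring ℂ[[w₁,w₂,w₃]], the element ∂F/∂w₁ = 2(w₁ − w₂²) does not belong to the ideal generated by w₁, ∂F/∂w₂ = −4w₂(w₁ − w₂²), and ∂F/∂w₃ = −3w₃². -/

import Mathlib

open MvPowerSeries

private noncomputable def dd : Fin 3 →₀ ℕ := Finsupp.single 1 2

private lemma coeff_mul_X0 (f : MvPowerSeries (Fin 3) ℂ) :
    coeff dd (f * X 0) = 0 := by
  rw [coeff_mul]
  apply Finset.sum_eq_zero
  rintro ⟨p, q⟩ hpq
  rw [Finset.HasAntidiagonal.mem_antidiagonal] at hpq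
  rw [coeff_X, if_neg, mul_zero]
  intro hq
  have h0 := DFunLike.congr_fun hpq (0 : Fin 3)
  have hq' : q = Finsupp.single 0 1 := hq
  have hq0 : q 0 = 1 := by simp [hq']
  simp only [Finsupp.add_apply, Prod.fst, Prod.snd] at h0
  have hd0 : dd 0 = 0 := by simp [dd, Finsupp.single_apply]
  omega

private lemma coeff_mul_X2sq (f : MvPowerSeries (Fin 3) ℂ) :
    coeff dd (f * X 2 ^ 2) = 0 := by
  rw [X_pow_eq, coeff_mul]
  apply Finset.sum_eq_zero
  rintro ⟨p, q⟩ hpq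
  rw [Finset.HasAntidiagonal.mem_antidiagonal] at hpq
  rw [coeff_monomial, if_neg, mul_zero]
  intro hq
  have h0 := DFunLike.congr_fun hpq (2 : Fin 3)
  have hq' : q = Finsupp.single 2 2 := hq
  have hq0 : q 2 = 2 := by simp [hq']
  simp only [Finsupp.add_apply, Prod.fst, Prod.snd] at h0
  have hd0 : dd 2 = 0 := by simp [dd, Finsupp.single_apply]
  omega

private lemma coeff_mul_X1sq (f : MvPowerSeries (Fin 3) ℂ)
    (hf : constantCoeff f = 0) :
    coeff dd (f * X 1 ^ 2) = 0 := by
  rw [X_pow_eq, coeff_mul]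
  apply Finset.sum_eq_zero
  rintro ⟨p, q⟩ hpq
  rw [Finset.HasAntidiagonal.mem_antidiagonal] at hpq
  rw [coeff_monomial]
  split_ifs with hq
  · have hq'' : q = Finsupp.single 1 2 := hq
    have hq' : q = dd := hq''
    have hp : p = 0 := by
      rw [hq'] at hpq
      exact add_eq_right.mp hpq
    rw [hp]
    simp [coeff_zero_eq_constantCoeff, hf]
  · rw [mul_zero]

/-- In `ℂ[[w₁,w₂,w₃]]`, the partial derivative `∂F/∂w₁ = 2(w₁ − w₂²)` of
`F = (w₁ − w₂²)² − w₃³` does not belong to the ideal generated by `w₁`,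
`∂F/∂w₂ = −4w₂(w₁ − w₂²)` and `∂F/∂w₃ = −3w₃²`. -/
theorem stmt_9 :
    (2 * (X 0 - X 1 ^ 2) : MvPowerSeries (Fin 3) ℂ) ∉
      Ideal.span ({X 0, -4 * X 1 * (X 0 - X 1 ^ 2), -3 * X 2 ^ 2} :
        Set (MvPowerSeries (Fin 3) ℂ)) := by
  intro h
  rw [show ({X 0, -4 * X 1 * (X 0 - X 1 ^ 2), -3 * X 2 ^ 2} :
        Set (MvPowerSeries (Fin 3) ℂ)) =
      insert (X 0) (insert (-4 * X 1 * (X 0 - X 1 ^ 2)) {-3 * X 2 ^ 2}) from rfl,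
    Ideal.mem_span_insert] at h
  obtain ⟨a, z, hz, hx⟩ := h
  rw [Ideal.mem_span_insert] at hz
  obtain ⟨b, z', hz', hzeq⟩ := hz
  rw [Ideal.mem_span_singleton] at hz'
  obtain ⟨c, hc⟩ := hz'
  subst hzeq hc
  have e1 : (2 * (X 0 - X 1 ^ 2) : MvPowerSeries (Fin 3) ℂ)
      = 2 * X 0 + (-2 : MvPowerSeries (Fin 3) ℂ) * X 1 ^ 2 := by ring
  have e2 : a * X 0 + (b * (-4 * X 1 * (X 0 - X 1 ^ 2)) + -3 * X 2 ^ 2 * c)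
      = (a + (-4) * b * X 1) * X 0 + ((4 * b * X 1) * X 1 ^ 2
        + (-3 * c) * X 2 ^ 2) := by ring
  have key := congrArg (coeff (R := ℂ) dd) hx
  rw [e1, e2] at key
  simp only [map_add] at key
  have lhs : coeff dd ((-2 : MvPowerSeries (Fin 3) ℂ) * X 1 ^ 2) = -2 := by
    have hx2 : coeff dd ((X 1 : MvPowerSeries (Fin 3) ℂ) ^ 2) = 1 := by
      simp [X_pow_eq, coeff_monomial, dd]
    have h' : (-2 : MvPowerSeries (Fin 3) ℂ) * X 1 ^ 2 = -(X 1 ^ 2 + X 1 ^ 2) := by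
      ring
    rw [h', map_neg, map_add, hx2]; norm_num
  rw [coeff_mul_X0, coeff_mul_X0, coeff_mul_X2sq, lhs,
    coeff_mul_X1sq _ (by simp)] at key
  norm_num at key
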